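/- Let q ≥ 2, h ≥ 1 and u ≥ 1 be integers, and let p(x) = a_h x^h + ⋯ + a_0 be an integer polynomial of degree h all of whose coefficients a_0, …, a_h are positive. Let m₀, m₁, m₂, m₃ be integers with q^(u-1) ≤ m₀, m₂, m₃ < q^u and 1 ≤ m₁ < q^u/(hq(6q)^h), and write t(x) = m₃x³ + m₂x² − m₁x + m₀. Then in the polynomial p(t(x)) the coefficient of x^1 is negative and all other coefficients (of x^0, x^2, x^3, …, x^(3h)) are positive. -/

import Mathlib

open Polynomial Finset

namespace CPTaux

/-- coefficient-wise absolute domination -/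
def Dom (P Q : Polynomial ℤ) : Prop := ∀ i, |P.coeff i| ≤ Q.coeff i

lemma Dom.nn {P Q : Polynomial ℤ} (h : Dom P Q) (i : ℕ) : 0 ≤ Q.coeff i :=
  le_trans (abs_nonneg _) (h i)

lemma Dom.mul {P1 P2 Q1 Q2 : Polynomial ℤ} (h1 : Dom P1 Q1) (h2 : Dom P2 Q2) :
    Dom (P1 * P2) (Q1 * Q2) := by
  intro i
  rw [coeff_mul, coeff_mul]
  refine le_trans (Finset.abs_sum_le_sum_abs _ _) (Finset.sum_le_sum ?_)
  intro x _
  rw [abs_mul]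
  exact mul_le_mul (h1 _) (h2 _) (abs_nonneg _) (h1.nn _)

lemma Dom.one : Dom 1 1 := by
  intro i
  rcases eq_or_ne i 0 with rfl | h
  · simp [coeff_one]
  · simp [coeff_one, h]

lemma Dom.pow {P Q : Polynomial ℤ} (h : Dom P Q) (k : ℕ) : Dom (P ^ k) (Q ^ k) := by
  induction k with
  | zero => simpa using Dom.one
  | succ n ih => rw [pow_succ, pow_succ]; exact ih.mul h

lemma dom_self {P : Polynomial ℤ} (h : ∀ i, 0 ≤ P.coeff i) : Dom P P :=
  fun i => le_of_eq (abs_of_nonneg (h i))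

lemma pow_coeff_nonneg {P : Polynomial ℤ} (h : ∀ i, 0 ≤ P.coeff i) (k i : ℕ) :
    0 ≤ (P ^ k).coeff i :=
  ((dom_self h).pow k).nn i

lemma coeff_le_eval_one {P : Polynomial ℤ} (h : ∀ i, 0 ≤ P.coeff i) (i : ℕ) :
    P.coeff i ≤ P.eval 1 := by
  rw [eval_eq_sum_range]
  rcases le_or_gt i P.natDegree with hi | hi
  · have h2 : P.coeff i = P.coeff i * (1:ℤ)^i := by ring
    rw [h2]
    exact Finset.single_le_sum (f := fun j => P.coeff j * (1:ℤ)^j)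
      (fun j _ => by simpa using h j) (Finset.mem_range.2 (by omega))
  · rw [coeff_eq_zero_of_natDegree_lt hi]
    exact Finset.sum_nonneg fun j _ => by simpa using h j

lemma mul_coeff_mono {P1 P2 Q1 Q2 : Polynomial ℤ}
    (n1 : ∀ i, 0 ≤ P1.coeff i) (n2 : ∀ i, 0 ≤ P2.coeff i)
    (l1 : ∀ i, P1.coeff i ≤ Q1.coeff i) (l2 : ∀ i, P2.coeff i ≤ Q2.coeff i) (i : ℕ) :
    (P1 * P2).coeff i ≤ (Q1 * Q2).coeff i := by
  rw [coeff_mul, coeff_mul]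
  refine Finset.sum_le_sum fun x _ => ?_
  exact mul_le_mul (l1 _) (l2 _) (n2 _) (le_trans (n1 _) (l1 _))

lemma pow_coeff_mono {P Q : Polynomial ℤ}
    (n1 : ∀ i, 0 ≤ P.coeff i) (l1 : ∀ i, P.coeff i ≤ Q.coeff i) (k : ℕ) (i : ℕ) :
    (P ^ k).coeff i ≤ (Q ^ k).coeff i := by
  induction k generalizing i with
  | zero => simp
  | succ n ih =>
      rw [pow_succ, pow_succ]
      exact mul_coeff_mono (pow_coeff_nonneg n1 n) n1 ih l1 i

lemma le_coeff_mul {P Q : Polynomial ℤ} (hP : ∀ i, 0 ≤ P.coeff i) (hQ : ∀ i, 0 ≤ Q.coeff i)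
    (a b : ℕ) : P.coeff a * Q.coeff b ≤ (P * Q).coeff (a + b) := by
  rw [coeff_mul]
  exact Finset.single_le_sum (f := fun x => P.coeff x.1 * Q.coeff x.2)
    (fun x _ => mul_nonneg (hP _) (hQ _)) (a := (a, b)) (Finset.HasAntidiagonal.mem_antidiagonal.2 rfl)

noncomputable def w : Polynomial ℤ := X ^ 3 + X ^ 2 + 1

lemma w_coeff (i : ℕ) : w.coeff i = if i = 0 ∨ i = 2 ∨ i = 3 then 1 else 0 := by
  rcases i with _|_|_|_|i <;> simp [w, coeff_X_pow, coeff_one]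

lemma w_nonneg (i : ℕ) : 0 ≤ w.coeff i := by
  rw [w_coeff]; split <;> norm_num

lemma one_le_wpow (k : ℕ) (hk : 1 ≤ k) :
    ∀ i : ℕ, (i = 0 ∨ (2 ≤ i ∧ i ≤ 3 * k)) → 1 ≤ (w ^ k).coeff i := by
  induction k, hk using Nat.le_induction with
  | base =>
      intro i hi
      rw [pow_one, w_coeff, if_pos (by omega)]
  | succ n hn ih =>
      intro i hi
      have wn : ∀ j, 0 ≤ (w ^ n).coeff j := pow_coeff_nonneg w_nonneg n
      have key : ∀ a b : ℕ, a + b = i → (a = 0 ∨ (2 ≤ a ∧ a ≤ 3 * n)) →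
          (b = 0 ∨ b = 2 ∨ b = 3) → 1 ≤ (w ^ (n+1)).coeff i := by
        intro a b hab ha hb
        rw [pow_succ, ← hab]
        have h1 := ih a ha
        have h2 : (1:ℤ) ≤ w.coeff b := by rw [w_coeff, if_pos hb]
        calc (1:ℤ) = 1 * 1 := by ring
          _ ≤ (w ^ n).coeff a * w.coeff b :=
              mul_le_mul h1 h2 zero_le_one (le_trans zero_le_one h1)
          _ ≤ _ := le_coeff_mul wn w_nonneg a b
      rcases hi with rfl | ⟨h2, h3⟩
      · exact key 0 0 rfl (Or.inl rfl) (Or.inl rfl)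
      · by_cases hc : i ≤ 3 * n
        · exact key i 0 (by omega) (by omega) (Or.inl rfl)
        · by_cases hc2 : i ≤ 3 * n + 2
          · exact key (i-2) 2 (by omega) (by omega) (by omega)
          · exact key (i-3) 3 (by omega) (by omega) (by omega)

lemma coeff_one_pow_eq_zero {P : Polynomial ℤ} (h : P.coeff 1 = 0) (k : ℕ) :
    (P ^ k).coeff 1 = 0 := by
  induction k with
  | zero => simp [coeff_one]
  | succ n ih =>
      rw [pow_succ, coeff_mul, Finset.Nat.sum_antidiagonal_eq_sum_range_succ_mk]
      simp [Finset.sum_range_succ, ih, h]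

lemma one_le_pow_int {a : ℤ} (ha : 1 ≤ a) (n : ℕ) : 1 ≤ a ^ n := by
  calc (1:ℤ) = 1 ^ n := (one_pow n).symm
    _ ≤ a ^ n := pow_le_pow_left₀ zero_le_one ha n

end CPTaux
set_option maxHeartbeats 1000000 in
open CPTaux in
theorem coefficients_of_p_comp_t
    (q h u : ℕ) (hq : 2 ≤ q) (hh : 1 ≤ h) (hu : 1 ≤ u)
    (p : Polynomial ℤ) (hdeg : p.natDegree = h)
    (hcoeff : ∀ i : ℕ, i ≤ h → 0 < p.coeff i)
    (m₀ m₁ m₂ m₃ : ℤ)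
    (hm₀ : (q : ℤ) ^ (u - 1) ≤ m₀) (hm₀' : m₀ < (q : ℤ) ^ u)
    (hm₂ : (q : ℤ) ^ (u - 1) ≤ m₂) (hm₂' : m₂ < (q : ℤ) ^ u)
    (hm₃ : (q : ℤ) ^ (u - 1) ≤ m₃) (hm₃' : m₃ < (q : ℤ) ^ u)
    (hm₁ : 1 ≤ m₁)
    (hm₁' : (m₁ : ℝ) < (q : ℝ) ^ u / ((h : ℝ) * q * (6 * q : ℝ) ^ h))
    (t : Polynomial ℤ)
    (ht : t = C m₃ * X ^ 3 + C m₂ * X ^ 2 - C m₁ * X + C m₀) :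
    (p.comp t).coeff 1 < 0 ∧
    (∀ i : ℕ, i = 0 ∨ (2 ≤ i ∧ i ≤ 3 * h) → 0 < (p.comp t).coeff i) := by
  classical
  set Qz : ℤ := (q : ℤ) with hQz
  have hQ2 : (2:ℤ) ≤ Qz := by rw [hQz]; exact_mod_cast hq
  set R : ℤ := (q : ℤ) ^ (u - 1) with hRdef
  have hR1 : (1:ℤ) ≤ R := one_le_pow_int (by linarith) (u - 1)
  have hQu : (q:ℤ) ^ u = Qz * R := by
    conv_lhs => rw [show u = (u - 1) + 1 by omega]
    rw [pow_succ]; ring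
  have hm₀'' : m₀ < Qz * R := by rw [← hQu]; exact hm₀'
  have hm₂'' : m₂ < Qz * R := by rw [← hQu]; exact hm₂'
  have hm₃'' : m₃ < Qz * R := by rw [← hQu]; exact hm₃'
  have hm0pos : 0 < m₀ := by linarith
  have hm2pos : 0 < m₂ := by linarith
  have hm3pos : 0 < m₃ := by linarith
  have hm1pos : 0 < m₁ := by linarith
  have h6Q : (1:ℤ) ≤ 6 * Qz := by linarith
  -- the key size hypothesis, in ℤ
  have hM : m₁ * ((h:ℤ) * (6 * Qz) ^ h) < R := by
    have hD : (0:ℝ) < (h:ℝ) * q * (6 * q : ℝ) ^ h := by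
      have : (1:ℝ) ≤ (h:ℝ) := by exact_mod_cast hh
      have hq' : (2:ℝ) ≤ (q:ℝ) := by exact_mod_cast hq
      positivity
    have h1 : (m₁:ℝ) * ((h:ℝ) * q * (6 * q : ℝ) ^ h) < (q:ℝ) ^ u := (lt_div_iff₀ hD).1 hm₁'
    have h2 : m₁ * ((h:ℤ) * Qz * (6 * Qz) ^ h) < (q:ℤ) ^ u := by rw [hQz]; exact_mod_cast h1
    have h3 : m₁ * ((h:ℤ) * (6 * Qz) ^ h) * Qz < R * Qz := by
      calc m₁ * ((h:ℤ) * (6 * Qz) ^ h) * Qz = m₁ * ((h:ℤ) * Qz * (6 * Qz) ^ h) := by ring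
        _ < (q:ℤ) ^ u := h2
        _ = R * Qz := by rw [hQu]; ring
    exact lt_of_mul_lt_mul_right h3 (by linarith)
  have hhZ : (1:ℤ) ≤ (h:ℤ) := by exact_mod_cast hh
  have hm1R : m₁ < R := by
    have h1 : (1:ℤ) ≤ (h:ℤ) * (6 * Qz) ^ h := by
      have := one_le_pow_int h6Q h
      nlinarith
    nlinarith
  -- coefficient helpers
  have hC : ∀ (a : ℤ) (n : ℕ), ((a : Polynomial ℤ)).coeff n = if n = 0 then a else 0 := by
    intro a n; rw [← Polynomial.C_eq_intCast, coeff_C]; norm_cast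
  set s : Polynomial ℤ := C m₃ * X ^ 3 + C m₂ * X ^ 2 + C m₀ with hs
  set e : Polynomial ℤ := C m₃ * X ^ 3 + C m₂ * X ^ 2 + C m₁ * X + C m₀ with he
  have ct : ∀ i, t.coeff i =
      if i = 0 then m₀ else if i = 1 then -m₁ else if i = 2 then m₂ else if i = 3 then m₃ else 0 := by
    intro i; rw [ht]
    rcases i with _|_|_|_|i <;> simp [coeff_X_pow, coeff_one, hC]
  have cs : ∀ i, s.coeff i =
      if i = 0 then m₀ else if i = 1 then 0 else if i = 2 then m₂ else if i = 3 then m₃ else 0 := by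
    intro i; rw [hs]
    rcases i with _|_|_|_|i <;> simp [coeff_X_pow, coeff_one, hC]
  have ce : ∀ i, e.coeff i =
      if i = 0 then m₀ else if i = 1 then m₁ else if i = 2 then m₂ else if i = 3 then m₃ else 0 := by
    intro i; rw [he]
    rcases i with _|_|_|_|i <;> simp [coeff_X_pow, coeff_one, hC]
  have ce_nn : ∀ i, 0 ≤ e.coeff i := by
    intro i; rw [ce]; split_ifs <;> linarith
  have cs_nn : ∀ i, 0 ≤ s.coeff i := by
    intro i; rw [cs]; split_ifs <;> linarith
  have dom_t : Dom t e := by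
    intro i; rw [ct, ce]; split_ifs <;> simp [abs_le] <;> omega
  have dom_s : Dom s e := by
    intro i; rw [cs, ce]; split_ifs <;> simp [abs_le] <;> omega
  have low : ∀ i, (C R * w).coeff i ≤ s.coeff i := by
    intro i; rw [coeff_C_mul, w_coeff, cs]; split_ifs <;> simp <;> omega
  have low_nn : ∀ i, 0 ≤ (C R * w).coeff i := by
    intro i; rw [coeff_C_mul]; exact mul_nonneg (by linarith) (w_nonneg i)
  -- lower bound for coefficients of s^k
  have spow_low : ∀ k : ℕ, 1 ≤ k → ∀ i : ℕ, (i = 0 ∨ (2 ≤ i ∧ i ≤ 3 * k)) →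
      R ^ k ≤ (s ^ k).coeff i := by
    intro k hk i hi
    calc R ^ k = R ^ k * 1 := by ring
      _ ≤ R ^ k * (w ^ k).coeff i :=
          mul_le_mul_of_nonneg_left (one_le_wpow k hk i hi) (pow_nonneg (by linarith) k)
      _ = ((C R * w) ^ k).coeff i := by rw [mul_pow, ← C_pow, coeff_C_mul]
      _ ≤ (s ^ k).coeff i := pow_coeff_mono low_nn low k i
  -- upper bound for coefficients of e^k
  have eval1e : e.eval 1 = m₃ + m₂ + m₁ + m₀ := by rw [he]; simp
  have hRQR : R ≤ Qz * R := by nlinarith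
  have hE : e.eval 1 ≤ 4 * (Qz * R) := by rw [eval1e]; linarith
  have hEnn : 0 ≤ e.eval 1 := by rw [eval1e]; linarith
  have ecoeff_bound : ∀ k i : ℕ, (e ^ k).coeff i ≤ (4 * (Qz * R)) ^ k := by
    intro k i
    calc (e ^ k).coeff i ≤ (e ^ k).eval 1 := coeff_le_eval_one (pow_coeff_nonneg ce_nn k) i
      _ = (e.eval 1) ^ k := by rw [eval_pow]
      _ ≤ (4 * (Qz * R)) ^ k := pow_le_pow_left₀ hEnn hE k
  -- constant coefficients
  have ht0 : t.eval 0 = m₀ := by rw [ht]; simp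
  have hs0 : s.eval 0 = m₀ := by rw [hs]; simp
  have tpow0 : ∀ k : ℕ, (t ^ k).coeff 0 = m₀ ^ k := by
    intro k; rw [coeff_zero_eq_eval_zero, eval_pow, ht0]
  have spow0 : ∀ k : ℕ, (s ^ k).coeff 0 = m₀ ^ k := by
    intro k; rw [coeff_zero_eq_eval_zero, eval_pow, hs0]
  -- the geometric-sum decomposition
  have hts : t - s = -(C m₁ * X) := by rw [ht, hs]; ring
  have geom : ∀ k : ℕ, t ^ k - s ^ k =
      C (-m₁) * ((∑ j ∈ Finset.range k, t ^ j * s ^ (k - 1 - j)) * X) := by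
    intro k
    rw [map_neg]
    calc t ^ k - s ^ k = (∑ j ∈ Finset.range k, t ^ j * s ^ (k - 1 - j)) * (t - s) :=
          (geom_sum₂_mul t s k).symm
      _ = -C m₁ * ((∑ j ∈ Finset.range k, t ^ j * s ^ (k - 1 - j)) * X) := by rw [hts]; ring
  -- bound on the coefficients of the geometric sum
  have Gbound : ∀ k : ℕ, ∀ n : ℕ,
      |(∑ j ∈ Finset.range k, t ^ j * s ^ (k - 1 - j)).coeff n| ≤ (k:ℤ) * (4 * (Qz * R)) ^ (k-1) := by
    intro k n
    rw [Polynomial.finset_sum_coeff]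
    calc |∑ j ∈ Finset.range k, (t ^ j * s ^ (k - 1 - j)).coeff n|
        ≤ ∑ j ∈ Finset.range k, |(t ^ j * s ^ (k - 1 - j)).coeff n| :=
          Finset.abs_sum_le_sum_abs _ _
      _ ≤ ∑ j ∈ Finset.range k, (4 * (Qz * R)) ^ (k-1) := by
          refine Finset.sum_le_sum fun j hj => ?_
          have hj' : j + (k - 1 - j) = k - 1 := by
            have := Finset.mem_range.1 hj; omega
          have hd : Dom (t ^ j * s ^ (k - 1 - j)) (e ^ (k-1)) := by
            have := (dom_t.pow j).mul (dom_s.pow (k - 1 - j))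
            rwa [← pow_add, hj'] at this
          exact le_trans (hd n) (ecoeff_bound (k-1) n)
      _ = (k:ℤ) * (4 * (Qz * R)) ^ (k-1) := by
          rw [Finset.sum_const, Finset.card_range, nsmul_eq_mul]
  -- main positivity estimate for coefficients of t^k
  have main : ∀ k : ℕ, 1 ≤ k → k ≤ h → ∀ i : ℕ, (i = 0 ∨ (2 ≤ i ∧ i ≤ 3 * k)) →
      0 < (t ^ k).coeff i := by
    intro k hk hkh i hi
    obtain ⟨k', rfl⟩ : ∃ k', k = k' + 1 := ⟨k - 1, by omega⟩
    have hdiff : |(t ^ (k'+1)).coeff i - (s ^ (k'+1)).coeff i|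
        ≤ m₁ * (((k'+1:ℕ):ℤ) * (4 * (Qz * R)) ^ k') := by
      rw [← Polynomial.coeff_sub, geom (k'+1), coeff_C_mul, abs_mul, abs_neg,
        abs_of_pos hm1pos]
      refine mul_le_mul_of_nonneg_left ?_ (le_of_lt hm1pos)
      rcases i with _ | n
      · rw [Polynomial.mul_coeff_zero, coeff_X_zero, mul_zero, abs_zero]
        positivity
      · rw [Polynomial.coeff_mul_X]
        have := Gbound (k'+1) n
        simpa using this
    have hnum : m₁ * (((k'+1:ℕ):ℤ) * (4 * (Qz * R)) ^ k') < R ^ (k'+1) := by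
      have hk'h : (((k'+1:ℕ):ℤ)) ≤ (h:ℤ) := by exact_mod_cast hkh
      have h4Q : (4 * Qz) ^ k' ≤ (6 * Qz) ^ h :=
        le_trans (pow_le_pow_left₀ (by linarith) (by linarith) k')
          (pow_le_pow_right₀ (by linarith) (by omega))
      have hA : m₁ * (((k'+1:ℕ):ℤ) * (4 * Qz) ^ k') ≤ m₁ * ((h:ℤ) * (6 * Qz) ^ h) := by
        refine mul_le_mul_of_nonneg_left ?_ (le_of_lt hm1pos)
        refine mul_le_mul hk'h h4Q (pow_nonneg (by linarith) k') (by linarith)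
      have hRpow : (0:ℤ) < R ^ k' := pow_pos (by linarith) k'
      calc m₁ * (((k'+1:ℕ):ℤ) * (4 * (Qz * R)) ^ k')
          = m₁ * (((k'+1:ℕ):ℤ) * (4 * Qz) ^ k') * R ^ k' := by
            rw [show (4:ℤ) * (Qz * R) = (4 * Qz) * R by ring, mul_pow]; ring
        _ < R * R ^ k' := by
            refine mul_lt_mul_of_pos_right ?_ hRpow
            exact lt_of_le_of_lt hA hM
        _ = R ^ (k'+1) := by rw [pow_succ]; ring
    have hikp : i = 0 ∨ (2 ≤ i ∧ i ≤ 3 * (k'+1)) := hi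
    have hslow : R ^ (k'+1) ≤ (s ^ (k'+1)).coeff i := spow_low (k'+1) (by omega) i hikp
    have habs := abs_le.1 hdiff
    linarith [habs.1]
  -- degree bound
  have tdeg : t.natDegree ≤ 3 := by
    refine natDegree_le_iff_coeff_eq_zero.2 fun N hN => ?_
    rw [ct]; split_ifs <;> omega
  have tkdeg : ∀ k i : ℕ, 3 * k < i → (t ^ k).coeff i = 0 := by
    intro k i hik
    refine coeff_eq_zero_of_natDegree_lt (lt_of_le_of_lt ?_ hik)
    calc (t ^ k).natDegree ≤ k * t.natDegree := natDegree_pow_le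
      _ ≤ k * 3 := Nat.mul_le_mul_left k tdeg
      _ = 3 * k := by ring
  -- expansion of the composition
  have hcomp : ∀ i : ℕ, (p.comp t).coeff i =
      ∑ k ∈ Finset.range (h+1), p.coeff k * (t ^ k).coeff i := by
    have hp : p.comp t = ∑ k ∈ Finset.range (h+1), C (p.coeff k) * t ^ k := by
      conv_lhs => rw [p.as_sum_range' (h+1) (by rw [hdeg]; omega)]
      rw [Polynomial.sum_comp]
      refine Finset.sum_congr rfl fun k _ => ?_
      rw [Polynomial.monomial_comp]
    intro i
    rw [hp, Polynomial.finset_sum_coeff]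
    exact Finset.sum_congr rfl fun k _ => by rw [coeff_C_mul]
  -- coefficient 1 of t^k is negative for k ≥ 1
  have coeff1_neg : ∀ k : ℕ, 1 ≤ k → (t ^ k).coeff 1 < 0 := by
    intro k hk
    have hs1 : s.coeff 1 = 0 := by rw [cs]; norm_num
    have hspow1 : (s ^ k).coeff 1 = 0 := coeff_one_pow_eq_zero hs1 k
    have hG : 0 < (∑ j ∈ Finset.range k, t ^ j * s ^ (k - 1 - j)).coeff 0 := by
      rw [Polynomial.finset_sum_coeff]
      refine Finset.sum_pos (fun j _ => ?_) (by simp; omega)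
      rw [Polynomial.mul_coeff_zero, tpow0, spow0]
      exact mul_pos (pow_pos hm0pos j) (pow_pos hm0pos _)
    have hd : (t ^ k).coeff 1 - (s ^ k).coeff 1 =
        -m₁ * (∑ j ∈ Finset.range k, t ^ j * s ^ (k - 1 - j)).coeff 0 := by
      rw [← Polynomial.coeff_sub, geom k, coeff_C_mul,
        show (1:ℕ) = 0 + 1 from rfl, Polynomial.coeff_mul_X]
    rw [hspow1, sub_zero] at hd
    rw [hd]
    have : 0 < m₁ * (∑ j ∈ Finset.range k, t ^ j * s ^ (k - 1 - j)).coeff 0 :=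
      mul_pos hm1pos hG
    linarith
  constructor
  · -- coefficient of x
    rw [hcomp 1]
    have hlt : ∑ k ∈ Finset.range (h+1), p.coeff k * (t ^ k).coeff 1
        < ∑ k ∈ Finset.range (h+1), (0:ℤ) := by
      refine Finset.sum_lt_sum (fun k hk => ?_) ⟨1, Finset.mem_range.2 (by omega), ?_⟩
      · rcases Nat.eq_zero_or_pos k with rfl | hkpos
        · simp [coeff_one]
        · have h1 : 0 < p.coeff k := hcoeff k (by exact Nat.lt_succ_iff.1 (Finset.mem_range.1 hk))
          have h2 : (t ^ k).coeff 1 < 0 := coeff1_neg k hkpos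
          nlinarith
      · have h1 : 0 < p.coeff 1 := hcoeff 1 hh
        have h2 : (t ^ 1).coeff 1 < 0 := coeff1_neg 1 le_rfl
        nlinarith
    simpa using hlt
  · -- the other coefficients
    intro i hi
    rw [hcomp i]
    have hpos : ∑ k ∈ Finset.range (h+1), (0:ℤ)
        < ∑ k ∈ Finset.range (h+1), p.coeff k * (t ^ k).coeff i := by
      refine Finset.sum_lt_sum (fun k hk => ?_) ⟨h, Finset.mem_range.2 (by omega), ?_⟩
      · have hk' : k ≤ h := Nat.lt_succ_iff.1 (Finset.mem_range.1 hk)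
        have h1 : 0 < p.coeff k := hcoeff k hk'
        rcases hi with rfl | ⟨hi2, hi3⟩
        · rw [tpow0]
          positivity
        · by_cases hik : 3 * k < i
          · rw [tkdeg k i hik]; ring_nf; rfl
          · rcases Nat.eq_zero_or_pos k with rfl | hkpos
            · omega
            · have := main k hkpos hk' i (Or.inr ⟨hi2, by omega⟩)
              positivity
      · have h1 : 0 < p.coeff h := hcoeff h le_rfl
        rcases hi with rfl | ⟨hi2, hi3⟩
        · rw [tpow0]; positivity
        · have := main h hh le_rfl i (Or.inr ⟨hi2, hi3⟩)
          positivity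
    simpa using hpos
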